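/- Let X be a nonempty compact topological space and π : X × X → ℝ continuous with relative payoff Δ(x,y) = π(x,y) − π(y,x). If Δ is additively separable (equivalently Δ(x,y) = f(x) − f(y) for a continuous f), then imitation is essentially unbeatable: for every sequence (x_t) of opponent actions and every initial imitator action y_0, with (y_t) generated by any imitation rule (y_{t+1} = x_t if Δ(x_t,y_t) > 0, otherwise y_{t+1} ∈ {x_t, y_t}), the total relative payoff ∑_{t=0}^T Δ(x_t,y_t) ≤ max_{x,y ∈ X} Δ(x,y) for all T ≥ 0. -/

import Mathlib

/-- If the relative payoff function of a symmetric two-player game on a nonempty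
compact space with continuous payoffs is additively separable,
`Δ(x,y) = f(x) - f(y)` with `f` continuous, then any imitation rule is
essentially unbeatable: the cumulative relative payoff of the opponent never
exceeds the maximal one-period payoff differential. -/
theorem imitation_essentially_unbeatable {X : Type*} [TopologicalSpace X]
    [CompactSpace X] [Nonempty X]
    (π : X → X → ℝ) (hπ : Continuous fun p : X × X => π p.1 p.2)
    (Δ : X → X → ℝ) (hΔ : ∀ x y, Δ x y = π x y - π y x)
    (f : X → ℝ) (hf : Continuous f) (hsep : ∀ x y, Δ x y = f x - f y)
    (x y : ℕ → X)
    (hrule : ∀ t, (0 < Δ (x t) (y t) → y (t + 1) = x t) ∧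
      (y (t + 1) = x t ∨ y (t + 1) = y t)) :
    ∀ T, ∑ t ∈ Finset.range (T + 1), Δ (x t) (y t) ≤
      sSup (Set.range fun p : X × X => Δ p.1 p.2) := by
  -- continuity of Δ as a function on pairs
  have hΔc : Continuous (fun p : X × X => Δ p.1 p.2) := by
    have : (fun p : X × X => Δ p.1 p.2) = fun p : X × X => f p.1 - f p.2 := by
      funext p; exact hsep p.1 p.2
    rw [this]
    exact (hf.comp continuous_fst).sub (hf.comp continuous_snd)
  have hbdd : BddAbove (Set.range fun p : X × X => Δ p.1 p.2) :=
    (isCompact_range hΔc).bddAbove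
  -- invariant: partial sums are bounded by f (y (T+1)) - f (y 0)
  have key : ∀ T, ∑ t ∈ Finset.range (T + 1), Δ (x t) (y t) ≤
      f (y (T + 1)) - f (y 0) := by
    intro T
    induction T with
    | zero =>
      simp only [zero_add, Finset.sum_range_one, hsep]
      rcases (hrule 0).2 with h | h
      · rw [h]
      · rw [h]
        have hle : Δ (x 0) (y 0) ≤ 0 := by
          by_contra hpos
          push_neg at hpos
          have hx := (hrule 0).1 hpos
          rw [hx] at h
          rw [hsep, h] at hpos
          linarith
        rw [hsep] at hle
        linarith
    | succ n ih =>
      rw [Finset.sum_range_succ]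
      rcases (hrule (n + 1)).2 with h | h
      · rw [h, hsep]
        linarith
      · rw [h]
        have hle : Δ (x (n + 1)) (y (n + 1)) ≤ 0 := by
          by_contra hpos
          push_neg at hpos
          have := (hrule (n + 1)).1 hpos
          rw [this] at h
          rw [hsep] at hpos
          rw [h] at hpos
          linarith [hsep (y (n+1)) (y (n+1))]
        linarith
  intro T
  calc ∑ t ∈ Finset.range (T + 1), Δ (x t) (y t)
      ≤ f (y (T + 1)) - f (y 0) := key T
    _ = Δ (y (T + 1)) (y 0) := (hsep _ _).symm
    _ ≤ sSup (Set.range fun p : X × X => Δ p.1 p.2) :=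
        le_csSup hbdd ⟨(y (T + 1), y 0), rfl⟩
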